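/- If n ≥ 1 is an integer and A ⊆ ℤ_{≥0}^n is a finite non-empty downset, then n·|A| ≤ |π₁(A)| + ⋯ + |πₙ(A)| + (1/2)·|A|·log₂|A|, where πᵢ denotes the projection of ℤ^n onto the i-th coordinate hyperplane (forgetting the i-th coordinate). -/

import Mathlib

/-- The projection of `ℤ^{n+1}` onto the `i`-th coordinate hyperplane: it deletes the
`i`-th coordinate of a vector. -/
def proj {α : Type*} {n : ℕ} (i : Fin (n + 1)) (a : Fin (n + 1) → α) : Fin n → α :=
  fun j => a (i.succAbove j)

open Finset

lemma logA {x : ℝ} (hx : 0 < x) (hx2 : x ≤ 1/2) :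
    2 * (1 - x) * Real.log 2 ≤ -Real.log x := by
  have h1 : Real.log (2*x) ≤ 2*x - 1 := Real.log_le_sub_one_of_pos (by linarith)
  have h2 : Real.log (2*x) = Real.log 2 + Real.log x := Real.log_mul (by norm_num) hx.ne'
  have h3 : Real.log 2 < 1 := by
    have := Real.log_two_lt_d9; linarith
  nlinarith [mul_nonneg (by linarith : (0:ℝ) ≤ 1 - 2*x) (by linarith : (0:ℝ) ≤ 1 - Real.log 2)]

lemma logB {y : ℝ} (hy : 1/2 ≤ y) (hy1 : y ≤ 1) :
    2 * (1 - y)^2 * Real.log 2 ≤ y * (-Real.log y) := by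
  have hypos : 0 < y := by linarith
  have l2lt : Real.log 2 < 0.6931471808 := Real.log_two_lt_d9
  have l2gt : 0.6931471803 < Real.log 2 := Real.log_two_gt_d9
  rcases le_or_gt y (3/5) with h | h
  · have h1 : Real.log (2*y) ≤ 2*y - 1 := Real.log_le_sub_one_of_pos (by linarith)
    have h2 : Real.log (2*y) = Real.log 2 + Real.log y := Real.log_mul (by norm_num) hypos.ne'
    nlinarith [mul_nonneg (by linarith : (0:ℝ) ≤ y - 1/2) (by linarith : (0:ℝ) ≤ 3/5 - y)]
  · have h1 : Real.log y ≤ y - 1 := Real.log_le_sub_one_of_pos hypos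
    nlinarith [mul_nonneg (by linarith : (0:ℝ) ≤ 1 - y)
      (by nlinarith : (0:ℝ) ≤ y - 2 * Real.log 2 * (1 - y))]

lemma entropy_lemma {ι : Type*} [DecidableEq ι] (J : Finset ι) (m : ι → ℝ) (j₀ : ι)
    (hj₀ : j₀ ∈ J) (hpos : ∀ j ∈ J, 0 < m j) (hmax : ∀ j ∈ J, m j ≤ m j₀) :
    ∑ j ∈ J, m j * Real.log (m j) + 2 * ((∑ j ∈ J, m j) - m j₀) * Real.log 2
      ≤ (∑ j ∈ J, m j) * Real.log (∑ j ∈ J, m j) := by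
  set M : ℝ := ∑ j ∈ J, m j with hM
  have hMj : ∀ j ∈ J, m j ≤ M :=
    fun j hj => Finset.single_le_sum (fun k hk => (hpos k hk).le) hj
  have hMpos : 0 < M := lt_of_lt_of_le (hpos j₀ hj₀) (hMj j₀ hj₀)
  have hterm : ∀ j ∈ J, m j ≤ M/2 →
      m j * (2 * (1 - m j / M) * Real.log 2) ≤ m j * (Real.log M - Real.log (m j)) := by
    intro j hj hhalf
    have hmj := hpos j hj
    have hx : 0 < m j / M := div_pos hmj hMpos
    have hx2 : m j / M ≤ 1/2 := by rw [div_le_iff₀ hMpos]; linarith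
    have hA := logA hx hx2
    have hlg : Real.log (m j / M) = Real.log (m j) - Real.log M :=
      Real.log_div hmj.ne' hMpos.ne'
    have : 2 * (1 - m j / M) * Real.log 2 ≤ Real.log M - Real.log (m j) := by
      rw [hlg] at hA; linarith
    exact mul_le_mul_of_nonneg_left this hmj.le
  have key : 2 * (M - m j₀) * Real.log 2 ≤ ∑ j ∈ J, m j * (Real.log M - Real.log (m j)) := by
    have hl2 : (0:ℝ) ≤ Real.log 2 := Real.log_nonneg (by norm_num)
    rcases le_or_gt (m j₀) (M/2) with hc | hc
    · -- all slices small
      have h1 : ∀ j ∈ J, m j * (2 * (1 - m j₀ / M) * Real.log 2)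
          ≤ m j * (Real.log M - Real.log (m j)) := by
        intro j hj
        refine le_trans ?_ (hterm j hj (le_trans (hmax j hj) hc))
        have hq : m j / M ≤ m j₀ / M := by gcongr; exact hmax j hj
        have hmjnn := (hpos j hj).le
        nlinarith [mul_nonneg (mul_nonneg hmjnn hl2) (by linarith : (0:ℝ) ≤ m j₀ / M - m j / M)]
      have h2 : ∑ j ∈ J, m j * (2 * (1 - m j₀ / M) * Real.log 2)
          = 2 * (M - m j₀) * Real.log 2 := by
        rw [← Finset.sum_mul, ← hM]
        field_simp
        try ring
      rw [← h2]
      exact Finset.sum_le_sum h1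
    · -- dominant slice j₀
      have hrest : ∀ j ∈ J.erase j₀, m j ≤ M - m j₀ := by
        intro j hj
        have hsum : ∑ k ∈ J.erase j₀, m k = M - m j₀ := by
          rw [hM, ← Finset.add_sum_erase J m hj₀]; ring
        rw [← hsum]
        exact Finset.single_le_sum (fun k hk => (hpos k (Finset.mem_of_mem_erase hk)).le) hj
      have h1 : ∀ j ∈ J.erase j₀, m j * (2 * (m j₀ / M) * Real.log 2)
          ≤ m j * (Real.log M - Real.log (m j)) := by
        intro j hj
        have hjJ := Finset.mem_of_mem_erase hj
        have hle : m j ≤ M/2 := le_trans (hrest j hj) (by linarith)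
        refine le_trans ?_ (hterm j hjJ hle)
        have hcan : m j₀ / M * M = m j₀ := div_mul_cancel₀ _ hMpos.ne'
        have hb : m j / M ≤ 1 - m j₀ / M := by
          rw [div_le_iff₀ hMpos]
          have := hrest j hj
          nlinarith
        nlinarith [mul_nonneg (mul_nonneg (hpos j hjJ).le hl2)
          (by linarith : (0:ℝ) ≤ (1 - m j / M) - m j₀ / M)]
      have hy : 1/2 ≤ m j₀ / M := by rw [le_div_iff₀ hMpos]; linarith
      have hy1 : m j₀ / M ≤ 1 := by rw [div_le_one hMpos]; exact hMj j₀ hj₀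
      have hB := logB hy hy1
      have hlg : Real.log (m j₀ / M) = Real.log (m j₀) - Real.log M :=
        Real.log_div (hpos j₀ hj₀).ne' hMpos.ne'
      have hj0term : 2 * (M - m j₀)^2 / M * Real.log 2
          ≤ m j₀ * (Real.log M - Real.log (m j₀)) := by
        rw [hlg] at hB
        have hMne : M ≠ 0 := hMpos.ne'
        have h := mul_le_mul_of_nonneg_left hB hMpos.le
        calc 2 * (M - m j₀)^2 / M * Real.log 2
            = M * (2 * (1 - m j₀ / M)^2 * Real.log 2) := by field_simp; try ring
          _ ≤ M * (m j₀ / M * -(Real.log (m j₀) - Real.log M)) := h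
          _ = m j₀ * (Real.log M - Real.log (m j₀)) := by field_simp; try ring
      have hrestsum : ∑ j ∈ J.erase j₀, m j * (2 * (m j₀ / M) * Real.log 2)
          = (M - m j₀) * (2 * (m j₀ / M) * Real.log 2) := by
        rw [← Finset.sum_mul]
        congr 1
        rw [hM, ← Finset.add_sum_erase J m hj₀]; ring
      have hsplit : ∑ j ∈ J, m j * (Real.log M - Real.log (m j))
          = m j₀ * (Real.log M - Real.log (m j₀))
            + ∑ j ∈ J.erase j₀, m j * (Real.log M - Real.log (m j)) :=
        (Finset.add_sum_erase J _ hj₀).symm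
      have hr2 : (M - m j₀) * (2 * (m j₀ / M) * Real.log 2)
            + 2 * (M - m j₀)^2 / M * Real.log 2 = 2 * (M - m j₀) * Real.log 2 := by
        field_simp; ring
      have := Finset.sum_le_sum h1
      rw [hrestsum] at this
      linarith
  have expand : ∑ j ∈ J, m j * (Real.log M - Real.log (m j))
      = M * Real.log M - ∑ j ∈ J, m j * Real.log (m j) := by
    rw [eq_sub_iff_add_eq, ← Finset.sum_add_distrib]
    have hc : ∀ j ∈ J, m j * (Real.log M - Real.log (m j)) + m j * Real.log (m j)
        = m j * Real.log M := fun j _ => by ring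
    rw [Finset.sum_congr rfl hc, ← Finset.sum_mul, ← hM]
  rw [expand] at key
  linarith

lemma supp_sum : ∀ (n : ℕ) (A : Finset (Fin n → ℕ)),
    (∀ a ∈ A, ∀ z : Fin n → ℕ, (∀ i, z i ≤ a i) → z ∈ A) →
    2 * (∑ a ∈ A, ((Finset.univ.filter fun i => a i ≠ 0).card : ℝ)) * Real.log 2
      ≤ A.card * Real.log A.card := by
  intro n
  induction n with
  | zero =>
    intro A _
    have h0 : ∀ a ∈ A, ((Finset.univ.filter fun i : Fin 0 => a i ≠ 0).card : ℝ) = 0 := by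
      intro a _
      simp
    rw [Finset.sum_congr rfl h0]
    simp only [Finset.sum_const_zero, mul_zero, zero_mul]
    have hc : A.card ≤ 1 := Finset.card_le_one.mpr (fun a _ b _ => Subsingleton.elim a b)
    interval_cases h : A.card <;> simp
  | succ n ih =>
    intro A hdown
    rcases A.eq_empty_or_nonempty with rfl | hA
    · simp
    set J : Finset ℕ := A.image (fun a => a 0) with hJ
    set B : ℕ → Finset (Fin n → ℕ) :=
      fun j => (A.filter fun a => a 0 = j).image Fin.tail with hB
    -- tail is injective on each fiber
    have hinj : ∀ j : ℕ, Set.InjOn (Fin.tail : (Fin (n+1) → ℕ) → Fin n → ℕ)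
        ↑(A.filter fun a => a 0 = j) := by
      intro j a ha b hb h
      rw [Finset.mem_coe] at ha hb
      have ha0 : a 0 = j := (Finset.mem_filter.mp ha).2
      have hb0 : b 0 = j := (Finset.mem_filter.mp hb).2
      funext i
      cases i using Fin.cases with
      | zero => rw [ha0, hb0]
      | succ i => exact congrFun h i
    have hcardB : ∀ j, (B j).card = (A.filter fun a => a 0 = j).card := by
      intro j
      exact Finset.card_image_of_injOn (hinj j)
    -- each slice is a downset
    have hBdown : ∀ j, ∀ b ∈ B j, ∀ z : Fin n → ℕ, (∀ i, z i ≤ b i) → z ∈ B j := by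
      intro j b hb z hz
      obtain ⟨a, ha, rfl⟩ := Finset.mem_image.mp hb
      have ha' := Finset.mem_filter.mp ha
      have hcons : Fin.cons j z ∈ A := by
        refine hdown a ha'.1 _ ?_
        intro i
        cases i using Fin.cases with
        | zero => simp [ha'.2]
        | succ i => simpa [Fin.tail] using hz i
      refine Finset.mem_image.mpr ⟨Fin.cons j z, Finset.mem_filter.mpr ⟨hcons, by simp⟩, ?_⟩
      simp [Fin.tail_cons]
    have h0J : 0 ∈ J := by
      obtain ⟨a, ha⟩ := hA
      have : (fun _ : Fin (n+1) => 0) ∈ A := hdown a ha _ (fun i => Nat.zero_le _)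
      exact Finset.mem_image.mpr ⟨_, this, rfl⟩
    have hBne : ∀ j ∈ J, (B j).Nonempty := by
      intro j hj
      obtain ⟨a, ha, rfl⟩ := Finset.mem_image.mp hj
      exact ⟨Fin.tail a, Finset.mem_image.mpr ⟨a, Finset.mem_filter.mpr ⟨ha, rfl⟩, rfl⟩⟩
    have hBsub : ∀ j, B j ⊆ B 0 := by
      intro j b hb
      obtain ⟨a, ha, rfl⟩ := Finset.mem_image.mp hb
      have ha' := Finset.mem_filter.mp ha
      have hcons : Fin.cons 0 (Fin.tail a) ∈ A := by
        refine hdown a ha'.1 _ ?_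
        intro i
        cases i using Fin.cases with
        | zero => simp
        | succ i => simp [Fin.tail]
      exact Finset.mem_image.mpr ⟨_, Finset.mem_filter.mpr ⟨hcons, by simp⟩, by simp⟩
    have hcardA : A.card = ∑ j ∈ J, (B j).card := by
      rw [Finset.card_eq_sum_card_fiberwise (f := fun a => a 0)
        (fun a ha => Finset.mem_image.mpr ⟨a, ha, rfl⟩)]
      exact Finset.sum_congr rfl (fun j _ => (hcardB j).symm)
    -- weight decomposition
    have hw : ∀ j : ℕ, ∀ a ∈ A.filter (fun a => a 0 = j),
        ((Finset.univ.filter fun i : Fin (n+1) => a i ≠ 0).card : ℝ)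
          = ((Finset.univ.filter fun i : Fin n => Fin.tail a i ≠ 0).card : ℝ)
            + (if j = 0 then 0 else 1) := by
      intro j a ha
      have ha0 : a 0 = j := (Finset.mem_filter.mp ha).2
      have : (Finset.univ.filter fun i : Fin (n+1) => a i ≠ 0).card
          = (if a 0 ≠ 0 then 1 else 0)
            + (Finset.univ.filter fun i : Fin n => a i.succ ≠ 0).card := by
        rw [Finset.card_filter, Fin.sum_univ_succ, Finset.card_filter]
      rw [this, ha0]
      have htail : (Finset.univ.filter fun i : Fin n => Fin.tail a i ≠ 0)
          = (Finset.univ.filter fun i : Fin n => a i.succ ≠ 0) := rfl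
      rw [htail]
      push_cast
      rcases eq_or_ne j 0 with rfl | hj
      · simp
      · simp [hj]; ring
    have hWsum : (∑ a ∈ A, ((Finset.univ.filter fun i => a i ≠ 0).card : ℝ))
        = ∑ j ∈ J, ((∑ b ∈ B j, ((Finset.univ.filter fun i => b i ≠ 0).card : ℝ))
            + (if j = 0 then 0 else ((B j).card : ℝ))) := by
      rw [← Finset.sum_fiberwise_of_maps_to (t := J) (g := fun a => a 0)
        (fun a ha => Finset.mem_image.mpr ⟨a, ha, rfl⟩)]
      refine Finset.sum_congr rfl (fun j hj => ?_)
      rw [Finset.sum_congr rfl (hw j)]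
      rw [Finset.sum_add_distrib, Finset.sum_const]
      rw [hB]
      rw [Finset.sum_image (fun a ha b hb h => hinj j ha hb h)]
      congr 1
      rw [← hcardB j]
      rcases eq_or_ne j 0 with rfl | hj'
      · simp
      · simp [hj', nsmul_eq_mul]; rfl
    set m : ℕ → ℝ := fun j => ((B j).card : ℝ) with hm
    have hmpos : ∀ j ∈ J, 0 < m j := by
      intro j hj
      have := Finset.card_pos.mpr (hBne j hj)
      simp only [hm]
      exact_mod_cast this
    have hmmax : ∀ j ∈ J, m j ≤ m 0 := by
      intro j _
      have := Finset.card_le_card (hBsub j)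
      simp only [hm]
      exact_mod_cast this
    have EL := entropy_lemma J m 0 h0J hmpos hmmax
    have hMA : ((A.card : ℝ)) = ∑ j ∈ J, m j := by
      rw [hcardA]; push_cast; rfl
    have hIH : ∀ j ∈ J, 2 * (∑ b ∈ B j, ((Finset.univ.filter fun i => b i ≠ 0).card : ℝ))
        * Real.log 2 ≤ m j * Real.log (m j) := fun j _ => ih (B j) (hBdown j)
    have he : ∑ j ∈ J, (if j = 0 then (0:ℝ) else m j) = (∑ j ∈ J, m j) - m 0 := by
      have hcg : ∀ j ∈ J, (if j = 0 then (0:ℝ) else m j)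
          = m j - (if j = 0 then m j else 0) := by
        intro j _
        split <;> simp
      rw [Finset.sum_congr rfl hcg, Finset.sum_sub_distrib, Finset.sum_ite_eq' J 0 m,
        if_pos h0J]
    have hL : 2 * (∑ a ∈ A, ((Finset.univ.filter fun i => a i ≠ 0).card : ℝ)) * Real.log 2
        = (∑ j ∈ J, 2 * (∑ b ∈ B j, ((Finset.univ.filter fun i => b i ≠ 0).card : ℝ))
            * Real.log 2) + 2 * ((∑ j ∈ J, m j) - m 0) * Real.log 2 := by
      rw [hWsum, Finset.sum_add_distrib, he]
      rw [← Finset.sum_mul, ← Finset.mul_sum]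
      ring
    rw [hL, hMA]
    calc (∑ j ∈ J, 2 * (∑ b ∈ B j, ((Finset.univ.filter fun i => b i ≠ 0).card : ℝ))
            * Real.log 2) + 2 * ((∑ j ∈ J, m j) - m 0) * Real.log 2
        ≤ (∑ j ∈ J, m j * Real.log (m j)) + 2 * ((∑ j ∈ J, m j) - m 0) * Real.log 2 := by
          have := Finset.sum_le_sum hIH
          linarith
      _ ≤ (∑ j ∈ J, m j) * Real.log (∑ j ∈ J, m j) := EL

/-- If `A ⊆ ℤ_{≥0}^n` (here with `n + 1 ≥ 1` coordinates) is a finite non-empty downset,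
then `n·|A| ≤ |π₁(A)| + ⋯ + |πₙ(A)| + (1/2)·|A|·log₂ |A|`, where `πᵢ` is the projection
onto the `i`-th coordinate hyperplane. -/
theorem downset_projections_bound (n : ℕ) (A : Finset (Fin (n + 1) → ℕ)) (hA : A.Nonempty)
    (hdown : ∀ a ∈ A, ∀ z : Fin (n + 1) → ℕ, (∀ i, z i ≤ a i) → z ∈ A) :
    ((n + 1 : ℕ) : ℝ) * A.card
      ≤ (∑ i : Fin (n + 1), ((A.image (proj i)).card : ℝ))
        + (1 / 2) * A.card * Real.logb 2 A.card := by
  have hprojcard : ∀ i : Fin (n + 1),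
      (A.image (proj i)).card = (A.filter fun a => a i = 0).card := by
    intro i
    have himg : A.image (proj i) = (A.filter fun a => a i = 0).image (proj i) := by
      apply Finset.Subset.antisymm
      · intro y hy
        obtain ⟨a, ha, rfl⟩ := Finset.mem_image.mp hy
        refine Finset.mem_image.mpr ⟨Function.update a i 0,
          Finset.mem_filter.mpr ⟨hdown a ha _ ?_, ?_⟩, ?_⟩
        · intro k
          rcases eq_or_ne k i with rfl | hk
          · simp
          · simp [Function.update_of_ne hk]
        · simp
        · funext j
          simp [proj, Function.update_of_ne (Fin.succAbove_ne i j)]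
      · exact Finset.image_subset_image (Finset.filter_subset _ _)
    have hinj : Set.InjOn (proj i) ((A.filter fun a => a i = 0 : Finset _) : Set (Fin (n+1) → ℕ)) := by
      intro a ha b hb h
      rw [Finset.mem_coe, Finset.mem_filter] at ha hb
      funext k
      rcases eq_or_ne k i with rfl | hk
      · rw [ha.2, hb.2]
      · obtain ⟨j, rfl⟩ := Fin.exists_succAbove_eq hk
        exact congrFun h j
    rw [himg, Finset.card_image_of_injOn hinj]
  have hswap : ∑ i : Fin (n + 1), (A.filter fun a => a i ≠ 0).card
      = ∑ a ∈ A, (Finset.univ.filter fun i => a i ≠ 0).card := by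
    simp only [Finset.card_filter]
    exact Finset.sum_comm
  have hcount : ∀ i : Fin (n + 1),
      (A.filter fun a => a i = 0).card + (A.filter fun a => ¬ a i = 0).card = A.card :=
    fun i => Finset.card_filter_add_card_filter_not _
  have hsup := supp_sum (n + 1) A hdown
  have hl2 : 0 < Real.log 2 := Real.log_pos one_lt_two
  have hWle : (∑ a ∈ A, ((Finset.univ.filter fun i => a i ≠ 0).card : ℝ))
      ≤ (1 / 2) * A.card * Real.logb 2 A.card := by
    rw [Real.logb]
    have heq : (1/2 : ℝ) * A.card * (Real.log A.card / Real.log 2)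
        = ((A.card : ℝ) * Real.log A.card) / (2 * Real.log 2) := by
      field_simp
      try ring
    rw [heq, le_div_iff₀ (by positivity)]
    nlinarith
  have hsumproj : (∑ i : Fin (n + 1), ((A.image (proj i)).card : ℝ))
      = ((n + 1 : ℕ) : ℝ) * A.card
        - (∑ a ∈ A, ((Finset.univ.filter fun i => a i ≠ 0).card : ℝ)) := by
    have h1 : ∀ i : Fin (n + 1), ((A.image (proj i)).card : ℝ)
        = (A.card : ℝ) - ((A.filter fun a => a i ≠ 0).card : ℝ) := by
      intro i
      rw [hprojcard i]
      have := hcount i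
      push_cast [← this]
      ring
    rw [Finset.sum_congr rfl (fun i _ => h1 i), Finset.sum_sub_distrib,
      Finset.sum_const, Finset.card_univ, Fintype.card_fin]
    have : (∑ i : Fin (n + 1), ((A.filter fun a => a i ≠ 0).card : ℝ))
        = ∑ a ∈ A, ((Finset.univ.filter fun i => a i ≠ 0).card : ℝ) := by
      exact_mod_cast hswap
    rw [this]
    push_cast
    ring
  rw [hsumproj]
  linarith
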